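/- Let g ∈ ℂ[x] and let n ≥ 1 be an integer. Suppose that g(x^n), as an element of ℂ(x), can be written as the ratio p(x)/q(x) of two polynomials p, q ∈ ℂ[x], q ≠ 0, each with at most B terms. Then g itself can be written as the ratio of two polynomials in ℂ[x], each with at most B terms (with nonzero denominator). -/

import Mathlib

open Polynomial Finset

/-- Extract from `f` the terms whose exponents are `≡ r (mod n)`, reindexed:
coefficient `k` of the result is the coefficient `n*k + r` of `f`. -/
noncomputable def fewnomialExtract (n r : ℕ) (f : Polynomial ℂ) : Polynomial ℂ :=
  ∑ k ∈ Finset.range (f.natDegree + 1), Polynomial.monomial k (f.coeff (n * k + r))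

lemma coeff_fewnomialExtract (n r : ℕ) (hn : 1 ≤ n) (f : Polynomial ℂ) (k : ℕ) :
    (fewnomialExtract n r f).coeff k = f.coeff (n * k + r) := by
  simp only [fewnomialExtract, Polynomial.finset_sum_coeff, Polynomial.coeff_monomial,
    Finset.sum_ite_eq', Finset.mem_range, not_lt, ite_eq_left_iff]
  intro hk
  refine (Polynomial.coeff_eq_zero_of_natDegree_lt ?_).symm
  have hkk : k ≤ n * k := Nat.le_mul_of_pos_left k hn
  omega

lemma fewnomialExtract_mul (n r : ℕ) (hn : 1 ≤ n) (hr : r < n) (g f : Polynomial ℂ) :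
    fewnomialExtract n r (Polynomial.expand ℂ n g * f) = g * fewnomialExtract n r f := by
  ext k
  rw [coeff_fewnomialExtract n r hn, Polynomial.coeff_mul, Polynomial.coeff_mul,
      Finset.Nat.sum_antidiagonal_eq_sum_range_succ_mk,
      Finset.Nat.sum_antidiagonal_eq_sum_range_succ_mk]
  have hinj : ∀ x ∈ Finset.range (k + 1), ∀ y ∈ Finset.range (k + 1),
      n * x = n * y → x = y := fun x _ y _ hxy =>
    Nat.eq_of_mul_eq_mul_left (by omega) hxy
  have hsub : (Finset.range (k + 1)).image (n * ·) ⊆ Finset.range (n * k + r + 1) := by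
    intro x hx
    simp only [Finset.mem_image, Finset.mem_range] at hx ⊢
    obtain ⟨a, ha, rfl⟩ := hx
    have h1 : a ≤ k := by omega
    have h2 : n * a ≤ n * k := Nat.mul_le_mul_left n h1
    omega
  rw [← Finset.sum_subset hsub ?_]
  · rw [Finset.sum_image hinj]
    refine Finset.sum_congr rfl fun a ha => ?_
    rw [Finset.mem_range] at ha
    have h1 : a ≤ k := by omega
    have h2 : n * a ≤ n * k := Nat.mul_le_mul_left n h1
    have h4 : n * (k - a) + n * a = n * k := by rw [← Nat.mul_add, Nat.sub_add_cancel h1]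
    have h3 : n * k + r - n * a = n * (k - a) + r := by omega
    rw [coeff_fewnomialExtract n r hn, Polynomial.coeff_expand_mul' hn, h3]
  · intro i hi hii
    have hnd : ¬ n ∣ i := by
      rintro ⟨a, rfl⟩
      apply hii
      simp only [Finset.mem_image, Finset.mem_range]
      refine ⟨a, ?_, rfl⟩
      simp only [Finset.mem_range] at hi
      by_contra hak
      have h2 : n * (k + 1) ≤ n * a := Nat.mul_le_mul_left n (by omega)
      have h3 : n * (k + 1) = n * k + n := by ring
      omega
    rw [Polynomial.coeff_expand hn, if_neg hnd, zero_mul]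

/-- **Lemma 2.7.** Let `g ∈ ℂ[x]` and `n ≥ 1`. If `g(x^n)`, as an element of `ℂ(x)`,
can be written as a ratio `p/q` of polynomials each with at most `B` terms (`q ≠ 0`),
then `g` itself can be written as such a ratio of polynomials with at most `B` terms. -/
theorem fewnomials_ratio_n_to_one (g : Polynomial ℂ) (n : ℕ) (hn : 1 ≤ n) (B : ℕ)
    (p q : Polynomial ℂ) (hq : q ≠ 0)
    (hp : p.support.card ≤ B) (hq' : q.support.card ≤ B)
    (h : algebraMap (Polynomial ℂ) (RatFunc ℂ) (g.comp (Polynomial.X ^ n)) =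
      algebraMap (Polynomial ℂ) (RatFunc ℂ) p / algebraMap (Polynomial ℂ) (RatFunc ℂ) q) :
    ∃ p' q' : Polynomial ℂ, q' ≠ 0 ∧ p'.support.card ≤ B ∧ q'.support.card ≤ B ∧
      algebraMap (Polynomial ℂ) (RatFunc ℂ) g =
        algebraMap (Polynomial ℂ) (RatFunc ℂ) p' / algebraMap (Polynomial ℂ) (RatFunc ℂ) q' := by
  have hinj : Function.Injective (algebraMap (Polynomial ℂ) (RatFunc ℂ)) :=
    RatFunc.algebraMap_injective ℂ
  have hq0 : algebraMap (Polynomial ℂ) (RatFunc ℂ) q ≠ 0 := by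
    intro hc; exact hq (hinj (by rw [hc, map_zero]))
  have key : Polynomial.expand ℂ n g * q = p := by
    apply hinj
    rw [map_mul, Polynomial.expand_eq_comp_X_pow, h, div_mul_cancel₀ _ hq0]
  obtain ⟨m, hm⟩ := Polynomial.support_nonempty.mpr hq
  rw [Polynomial.mem_support_iff] at hm
  set r := m % n with hr
  have hrn : r < n := Nat.mod_lt m (by omega)
  refine ⟨fewnomialExtract n r p, fewnomialExtract n r q, ?_, ?_, ?_, ?_⟩
  · intro hc
    apply hm
    have := congrArg (fun f => Polynomial.coeff f (m / n)) hc
    simp only [Polynomial.coeff_zero] at this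
    rwa [coeff_fewnomialExtract n r hn, hr, Nat.div_add_mod] at this
  · refine le_trans (Finset.card_le_card_of_injOn (fun k => n * k + r) ?_ ?_) hp
    · intro k hk
      rw [Finset.mem_coe, Polynomial.mem_support_iff] at hk ⊢
      rwa [coeff_fewnomialExtract n r hn] at hk
    · intro a _ b _ hab
      have hab' : n * a + r = n * b + r := hab
      exact Nat.eq_of_mul_eq_mul_left (by omega) (Nat.add_right_cancel hab')
  · refine le_trans (Finset.card_le_card_of_injOn (fun k => n * k + r) ?_ ?_) hq'
    · intro k hk
      rw [Finset.mem_coe, Polynomial.mem_support_iff] at hk ⊢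
      rwa [coeff_fewnomialExtract n r hn] at hk
    · intro a _ b _ hab
      have hab' : n * a + r = n * b + r := hab
      exact Nat.eq_of_mul_eq_mul_left (by omega) (Nat.add_right_cancel hab')
  · have hq'0 : algebraMap (Polynomial ℂ) (RatFunc ℂ) (fewnomialExtract n r q) ≠ 0 := by
      intro hc
      apply hm
      have h0 : fewnomialExtract n r q = 0 := hinj (by rw [hc, map_zero])
      have := congrArg (fun f => Polynomial.coeff f (m / n)) h0
      simp only [Polynomial.coeff_zero] at this
      rwa [coeff_fewnomialExtract n r hn, hr, Nat.div_add_mod] at this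
    rw [eq_div_iff hq'0, ← map_mul]
    apply congrArg
    rw [← fewnomialExtract_mul n r hn hrn g q, key]
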